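/- Let R and S be integral domains each equipped with a GCD monoid structure, let ρ : R → S be a ring homomorphism, let A be a matrix over R with finite index types, and let k be a natural number. Suppose d ∈ R is a greatest common divisor of the family of k×k minors of A (the determinants det(A.submatrix e f) over all injective e : Fin k → rows and f : Fin k → columns), and d' ∈ S is a greatest common divisor of the family of k×k minors of the entrywise image matrix ρ(A). Then ρ(d) divides d'. -/

import Mathlib

/-- If `d` is a greatest common divisor of the `k × k` minors of a matrix `A` over `R`
and `d'` is a greatest common divisor of the `k × k` minors of the entrywise image
`ρ(A)` over `S`, then `ρ(d)` divides `d'`: the image of a Fitting invariant divides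
the Fitting invariant of the reduced module. -/
theorem ringHom_gcd_of_minors_dvd
    {R S : Type*} [CommRing R] [IsDomain R] [GCDMonoid R]
    [CommRing S] [IsDomain S] [GCDMonoid S]
    (ρ : R →+* S)
    {m n : Type*} [Fintype m] [Fintype n]
    (A : Matrix m n R) (k : ℕ) (d : R) (d' : S)
    (hd_dvd : ∀ (e : Fin k → m) (f : Fin k → n),
        Function.Injective e → Function.Injective f →
        d ∣ (A.submatrix e f).det)
    (hd_great : ∀ c : R,
        (∀ (e : Fin k → m) (f : Fin k → n),
            Function.Injective e → Function.Injective f →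
            c ∣ (A.submatrix e f).det) → c ∣ d)
    (hd'_dvd : ∀ (e : Fin k → m) (f : Fin k → n),
        Function.Injective e → Function.Injective f →
        d' ∣ ((A.map ρ).submatrix e f).det)
    (hd'_great : ∀ c : S,
        (∀ (e : Fin k → m) (f : Fin k → n),
            Function.Injective e → Function.Injective f →
            c ∣ ((A.map ρ).submatrix e f).det) → c ∣ d') :
    ρ d ∣ d' := by
  apply hd'_great
  intro e f he hf
  have h := map_dvd ρ (hd_dvd e f he hf)
  rw [RingHom.map_det] at h
  exact h
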